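/- Fix θ ∈ ℝ^p with θ_j ≠ 0 for all j, a vector θ̂ ∈ ℝ^p with θ̂_j ≠ 0 for all j, λ > 0, γ ≥ 0, and a positive integer n_e. Let (e_{ij})_{1≤i≤n_e, 1≤j≤p} be a jointly independent family of real Gaussian random variables with e_{ij} ~ N(0, λ|θ_j|^{−1}|θ̂_j|^{−γ}). Then the PANDA expected penalty satisfies E[ ∑_{i=1}^{n_e} ( ∑_{j=1}^p θ_j e_{ij} )² ] = λ n_e ∑_{j=1}^p |θ_j| |θ̂_j|^{−γ}, i.e. the adaptive-lasso penalty with weights |θ̂_j|^{−γ}. -/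

import Mathlib

open MeasureTheory ProbabilityTheory
open scoped ProbabilityTheory NNReal

open Real
open scoped ENNReal

lemma aux_rpow_two (x : ℝ) : x ^ (2:ℝ) = x ^ 2 := by
  rw [show (2:ℝ) = ((2:ℕ):ℝ) by norm_num, Real.rpow_natCast]

lemma aux_integral_sq_exp {b : ℝ} (hb : 0 < b) :
    ∫ x : ℝ, x ^ 2 * rexp (-b * x ^ 2) = Real.sqrt π / (2 * b * Real.sqrt b) := by
  have key := integral_rpow_mul_exp_neg_mul_rpow (p := 2) (q := 2) two_pos (by norm_num) hb
  simp_rw [aux_rpow_two] at key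
  have hG : Real.Gamma (((2:ℝ)+1)/2) = Real.sqrt π / 2 := by
    rw [show (((2:ℝ)+1)/2 : ℝ) = 1/2 + 1 by norm_num, Real.Gamma_add_one (by norm_num),
      Real.Gamma_one_half_eq]; ring
  have hbp : b ^ (-((2:ℝ)+1)/2) = (b * Real.sqrt b)⁻¹ := by
    rw [show (-((2:ℝ)+1)/2 : ℝ) = -(1 + 1/2) by norm_num, Real.rpow_neg hb.le,
      Real.rpow_add hb, Real.rpow_one, ← Real.sqrt_eq_rpow]
  have habs : (∫ x : ℝ, x ^ 2 * rexp (-b * x ^ 2))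
      = 2 * ∫ x in Set.Ioi (0:ℝ), x ^ 2 * rexp (-b * x ^ 2) := by
    rw [← integral_comp_abs (f := fun x => x ^ 2 * rexp (-b * x ^ 2))]
    simp only [sq_abs]
  have hbpos : 0 < Real.sqrt b := Real.sqrt_pos.mpr hb
  rw [habs, key, hbp, hG]
  field_simp

lemma aux_integrable_sq_exp {b : ℝ} (hb : 0 < b) :
    Integrable (fun x : ℝ => x ^ 2 * rexp (-b * x ^ 2)) := by
  have h := integrable_rpow_mul_exp_neg_mul_sq hb (s := 2) (by norm_num)
  simpa [aux_rpow_two] using h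

lemma aux_gauss_integral_eq {v : ℝ≥0} (hv : v ≠ 0) (g : ℝ → ℝ) :
    ∫ x, g x ∂(gaussianReal 0 v) = ∫ x, gaussianPDFReal 0 v x * g x := by
  rw [gaussianReal_of_var_ne_zero _ hv, gaussianPDF_def]
  rw [show (fun x => ENNReal.ofReal (gaussianPDFReal 0 v x))
      = (fun x => (((gaussianPDFReal 0 v x).toNNReal : ℝ≥0) : ℝ≥0∞)) from rfl,
    integral_withDensity_eq_integral_smul ((measurable_gaussianPDFReal 0 v).real_toNNReal)]
  congr 1
  funext x
  simp [NNReal.smul_def, Real.coe_toNNReal _ (gaussianPDFReal_nonneg 0 v x)]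

lemma aux_gauss_integrable {v : ℝ≥0} (hv : v ≠ 0) {g : ℝ → ℝ}
    (hg : Integrable (fun x => gaussianPDFReal 0 v x * g x)) :
    Integrable g (gaussianReal 0 v) := by
  rw [gaussianReal_of_var_ne_zero _ hv, gaussianPDF_def]
  rw [show (fun x => ENNReal.ofReal (gaussianPDFReal 0 v x))
      = (fun x => (((gaussianPDFReal 0 v x).toNNReal : ℝ≥0) : ℝ≥0∞)) from rfl]
  rw [integrable_withDensity_iff_integrable_smul
    ((measurable_gaussianPDFReal 0 v).real_toNNReal)]
  have : (fun x => ((gaussianPDFReal 0 v x).toNNReal : ℝ≥0) • g x)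
      = fun x => gaussianPDFReal 0 v x * g x := by
    funext x
    simp [NNReal.smul_def, Real.coe_toNNReal _ (gaussianPDFReal_nonneg 0 v x)]
  rw [this]; exact hg

lemma aux_pdf_sq {v : ℝ≥0} (hv : v ≠ 0) :
    (fun x => gaussianPDFReal 0 v x * x ^ 2)
      = fun x => (Real.sqrt (2 * π * v))⁻¹ * (x ^ 2 * rexp (-(2 * (v:ℝ))⁻¹ * x ^ 2)) := by
  have hvpos : (0:ℝ) < v := lt_of_le_of_ne v.coe_nonneg (by exact_mod_cast (Ne.symm hv))
  funext x
  rw [gaussianPDFReal, sub_zero,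
    show -x ^ 2 / (2 * (v:ℝ)) = -(2 * (v:ℝ))⁻¹ * x ^ 2 by field_simp]
  ring

lemma aux_gauss_moment2 {v : ℝ≥0} (hv : v ≠ 0) :
    ∫ x, x ^ 2 ∂(gaussianReal 0 v) = (v : ℝ) := by
  have hvpos : (0:ℝ) < v := lt_of_le_of_ne v.coe_nonneg (by exact_mod_cast (Ne.symm hv))
  have hb : (0:ℝ) < (2 * (v:ℝ))⁻¹ := by positivity
  rw [aux_gauss_integral_eq hv, aux_pdf_sq hv, integral_const_mul, aux_integral_sq_exp hb]
  have ht : (0:ℝ) < 2 * (v:ℝ) := by positivity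
  rw [Real.sqrt_inv, show 2 * π * (v:ℝ) = π * (2 * (v:ℝ)) by ring,
    Real.sqrt_mul Real.pi_nonneg]
  have h1 : Real.sqrt (2 * (v:ℝ)) * Real.sqrt (2 * (v:ℝ)) = 2 * (v:ℝ) :=
    Real.mul_self_sqrt ht.le
  have hπ : (0:ℝ) < Real.sqrt π := Real.sqrt_pos.mpr Real.pi_pos
  have hst : (0:ℝ) < Real.sqrt (2 * (v:ℝ)) := Real.sqrt_pos.mpr ht
  field_simp

lemma aux_gauss_integrable_sq {v : ℝ≥0} (hv : v ≠ 0) :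
    Integrable (fun x => x ^ 2) (gaussianReal 0 v) := by
  have hvpos : (0:ℝ) < v := lt_of_le_of_ne v.coe_nonneg (by exact_mod_cast (Ne.symm hv))
  have hb : (0:ℝ) < (2 * (v:ℝ))⁻¹ := by positivity
  refine aux_gauss_integrable hv ?_
  rw [aux_pdf_sq hv]
  exact (aux_integrable_sq_exp hb).const_mul _

lemma aux_gauss_moment1 (v : ℝ≥0) : ∫ x, x ∂(gaussianReal 0 v) = 0 := by
  have hmap := gaussianReal_map_const_mul (μ := 0) (v := v) (-1)
  have h2 : (NNReal.mk ((-1:ℝ)^2) (sq_nonneg _) * v : ℝ≥0) = v := by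
    ext; simp
  rw [mul_zero, h2] at hmap
  have h3 : ∫ x, x ∂(gaussianReal 0 v)
      = ∫ x, (-1 : ℝ) * x ∂(gaussianReal 0 v) := by
    conv_lhs => rw [← hmap]
    exact integral_map (measurable_id.const_mul (-1:ℝ)).aemeasurable
      aestronglyMeasurable_id
  have h4 : ∫ x, (-1 : ℝ) * x ∂(gaussianReal 0 v) = - ∫ x, x ∂(gaussianReal 0 v) := by
    simp only [neg_one_mul]
    exact integral_neg (fun x : ℝ => x)
  linarith [h3, h4.symm ▸ h3]


/-- Adaptive-lasso row of Table 1: with noise e_{ij} ~ N(0, λ|θ_j|⁻¹|θ̂_j|^{−γ}),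
the expected PANDA penalty is the adaptive-lasso penalty λn_e∑|θ_j||θ̂_j|^{−γ}. -/
theorem stmt_6 {Ω : Type*} [MeasureSpace Ω] [IsProbabilityMeasure (ℙ : Measure Ω)]
    {p nE : ℕ} (hnE : 0 < nE) (θ θhat : Fin p → ℝ)
    (hθ : ∀ j, θ j ≠ 0) (hθhat : ∀ j, θhat j ≠ 0)
    (lam γ : ℝ) (hlam : 0 < lam) (hγ : 0 ≤ γ)
    (e : Fin nE → Fin p → Ω → ℝ) (hmeas : ∀ i j, Measurable (e i j))
    (hindep : iIndepFun
      (fun ij : Fin nE × Fin p => e ij.1 ij.2) ℙ)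
    (v : Fin p → ℝ≥0) (hv : ∀ j, (v j : ℝ) = lam * |θ j|⁻¹ * |θhat j| ^ (-γ))
    (hgauss : ∀ i j, Measure.map (e i j) ℙ = gaussianReal 0 (v j)) :
    (∫ ω, ∑ i, (∑ j, θ j * e i j ω) ^ 2 ∂ℙ)
      = lam * nE * ∑ j, |θ j| * |θhat j| ^ (-γ) := by

  have hvpos : ∀ j, (0:ℝ) < v j := fun j => by
    rw [hv j]
    have h1 := hθ j; have h2 := hθhat j
    positivity
  have hvne : ∀ j, v j ≠ 0 := fun j => by
    intro h
    have := hvpos j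
    rw [h] at this; simp at this
  have hIntSq : ∀ i j, Integrable (fun ω => e i j ω ^ 2) ℙ := by
    intro i j
    have h := aux_gauss_integrable_sq (hvne j)
    rw [← hgauss i j] at h
    exact (integrable_map_measure (measurable_id.pow_const 2).aestronglyMeasurable
      (hmeas i j).aemeasurable).mp h
  have hInt1 : ∀ i j, Integrable (e i j) ℙ := fun i j =>
    ((memLp_two_iff_integrable_sq (hmeas i j).aestronglyMeasurable).mpr
      (hIntSq i j)).integrable (by norm_num)
  have hM1 : ∀ i j, ∫ ω, e i j ω ∂ℙ = 0 := by
    intro i j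
    have h := integral_map (μ := ℙ) (φ := e i j) (hmeas i j).aemeasurable
      (f := fun x => x) aestronglyMeasurable_id
    rw [hgauss i j] at h
    rw [← h]
    exact aux_gauss_moment1 _
  have hM2 : ∀ i j, ∫ ω, e i j ω ^ 2 ∂ℙ = (v j : ℝ) := by
    intro i j
    have h := integral_map (μ := ℙ) (φ := e i j) (hmeas i j).aemeasurable
      (f := fun x => x ^ 2) (measurable_id.pow_const 2).aestronglyMeasurable
    rw [hgauss i j] at h
    rw [← h]
    exact aux_gauss_moment2 (hvne j)
  have hIntMul : ∀ i j k, Integrable (fun ω => e i j ω * e i k ω) ℙ := by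
    intro i j k
    by_cases hjk : j = k
    · subst hjk
      simpa [sq] using hIntSq i j
    · exact (hindep.indepFun (show ((i,j) : Fin nE × Fin p) ≠ (i,k) by
        simp [hjk])).integrable_mul (hInt1 i j) (hInt1 i k)
  have hprod : ∀ i j k, j ≠ k → ∫ ω, e i j ω * e i k ω ∂ℙ = 0 := by
    intro i j k hjk
    have h := (hindep.indepFun (show ((i,j) : Fin nE × Fin p) ≠ (i,k) by
      simp [hjk])).integral_mul_eq_mul_integral (hmeas i j).aestronglyMeasurable
      (hmeas i k).aestronglyMeasurable
    have h2 : ∫ ω, e i j ω * e i k ω ∂ℙ = (∫ ω, e i j ω ∂ℙ) * ∫ ω, e i k ω ∂ℙ := h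
    rw [h2, hM1 i j, hM1 i k, mul_zero]
  have expand : ∀ ω : Ω, ∑ i, (∑ j, θ j * e i j ω) ^ 2
      = ∑ i, ∑ j, ∑ k, (θ j * θ k) * (e i j ω * e i k ω) := by
    intro ω
    refine Finset.sum_congr rfl fun i _ => ?_
    rw [sq, Finset.sum_mul_sum]
    exact Finset.sum_congr rfl fun j _ => Finset.sum_congr rfl fun k _ => by ring
  simp_rw [expand]
  rw [integral_finset_sum _ (fun i _ => integrable_finset_sum _ (fun j _ =>
    integrable_finset_sum _ (fun k _ => (hIntMul i j k).const_mul _)))]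
  have step : ∀ i : Fin nE, (∫ ω, ∑ j, ∑ k, (θ j * θ k) * (e i j ω * e i k ω) ∂ℙ)
      = ∑ j, ∑ k, (θ j * θ k) * ∫ ω, e i j ω * e i k ω ∂ℙ := by
    intro i
    rw [integral_finset_sum _ (fun j _ => integrable_finset_sum _ (fun k _ =>
      (hIntMul i j k).const_mul _))]
    refine Finset.sum_congr rfl fun j _ => ?_
    rw [integral_finset_sum _ (fun k _ => (hIntMul i j k).const_mul _)]
    exact Finset.sum_congr rfl fun k _ => integral_const_mul _ _
  have inner : ∀ (i : Fin nE) (j : Fin p),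
      ∑ k, (θ j * θ k) * ∫ ω, e i j ω * e i k ω ∂ℙ
        = lam * (|θ j| * |θhat j| ^ (-γ)) := by
    intro i j
    rw [Finset.sum_eq_single j]
    · have hjj : ∫ ω, e i j ω * e i j ω ∂ℙ = (v j : ℝ) := by
        simp_rw [← sq]; exact hM2 i j
      have habs : |θ j| ≠ 0 := abs_ne_zero.mpr (hθ j)
      rw [hjj, hv j, show θ j * θ j = |θ j| * |θ j| from (abs_mul_abs_self _).symm]
      field_simp
    · intro k _ hkj
      rw [hprod i j k (Ne.symm hkj), mul_zero]
    · intro h; exact absurd (Finset.mem_univ j) h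
  simp_rw [step, inner]
  rw [← Finset.mul_sum, Finset.sum_const, Finset.card_univ, Fintype.card_fin,
    nsmul_eq_mul]
  ring
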